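/- Let x₁ ∈ ℂ^{L₁}, x₂ ∈ ℂ^{L₂} with x₁[0], x₂[0] ≠ 0, and suppose the polynomials z^{L₁−1}X₁(z) and z^{L₂−1}X₂(z) (which are ordinary polynomials of degrees L₁−1 and L₂−1) are coprime. Then the stacked vector x = (x₁; x₂) lies in the null space of the Sylvester matrix S = S(z^{L₁}X₁(z), z^{L₂}X₂(z)), and rank(S) = L₁ + L₂ − 1; consequently W = S*S is positive semidefinite, satisfies Wx = 0, and has rank L₁ + L₂ − 1. -/
import Mathlib

open ComplexOrder Matrix

/-- The `(d₁+d₂) × (d₁+d₂)` Sylvester matrix of `P₁, P₂`: the first `d₁` columns are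
successive shifts of the coefficient vector of `P₂` (leading coefficient on top), and the
remaining `d₂` columns are successive shifts of the negated coefficient vector of `P₁`. -/
noncomputable def sylvester (d₁ d₂ : ℕ) (P₁ P₂ : Polynomial ℂ) :
    Matrix (Fin (d₁ + d₂)) (Fin (d₁ + d₂)) ℂ :=
  fun i j =>
    if (j : ℕ) < d₁ then
      (if (j : ℕ) ≤ (i : ℕ) ∧ (i : ℕ) ≤ (j : ℕ) + d₂ then
        P₂.coeff (d₂ - ((i : ℕ) - (j : ℕ))) else 0)
    else
      (if (j : ℕ) - d₁ ≤ (i : ℕ) ∧ (i : ℕ) ≤ ((j : ℕ) - d₁) + d₁ then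
        -P₁.coeff (d₁ - ((i : ℕ) - ((j : ℕ) - d₁))) else 0)

/-- The polynomial `∑ y n · X^(m-1-n)` associated with a signal `y` (leading entry first). -/
noncomputable def revPoly (m : ℕ) (y : Fin m → ℂ) : Polynomial ℂ :=
  ∑ n : Fin m, Polynomial.C (y n) * Polynomial.X ^ (m - 1 - (n : ℕ))

lemma natDegree_revPoly_le (m : ℕ) (y : Fin m → ℂ) : (revPoly m y).natDegree ≤ m - 1 := by
  apply Polynomial.natDegree_sum_le_of_forall_le
  intro n _
  exact (Polynomial.natDegree_C_mul_X_pow_le _ _).trans (Nat.sub_le _ _)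

lemma coeff_revPoly (m : ℕ) (y : Fin m → ℂ) (k : Fin m) :
    (revPoly m y).coeff (m - 1 - (k : ℕ)) = y k := by
  rw [revPoly, Polynomial.finset_sum_coeff]
  rw [Finset.sum_eq_single k]
  · simp [Polynomial.coeff_C_mul, Polynomial.coeff_X_pow]
  · intro n _ hn
    have h1 : ¬ ((m : ℕ) - 1 - (n : ℕ) = m - 1 - (k : ℕ)) := by
      have := n.2; have := k.2
      intro h; exact hn (Fin.ext (by omega))
    simp only [Polynomial.coeff_C_mul, Polynomial.coeff_X_pow]
    rw [if_neg (fun h => h1 h.symm), mul_zero]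
  · simp

lemma X_mul_revPoly (m : ℕ) (y : Fin m → ℂ) :
    (∑ n : Fin m, Polynomial.C (y n) * Polynomial.X ^ (m - (n : ℕ)))
      = Polynomial.X * revPoly m y := by
  rw [revPoly, Finset.mul_sum]
  apply Finset.sum_congr rfl
  intro n _
  have h : m - (n : ℕ) = (m - 1 - (n : ℕ)) + 1 := by have := n.2; omega
  rw [h, pow_succ]; ring

lemma coeff_revPoly_mul (m : ℕ) (y : Fin m → ℂ) (R : Polynomial ℂ) (K : ℕ) :
    (revPoly m y * R).coeff K
      = ∑ j : Fin m, (if m - 1 - (j : ℕ) ≤ K then y j * R.coeff (K - (m - 1 - (j : ℕ))) else 0) := by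
  rw [revPoly, Finset.sum_mul, Polynomial.finset_sum_coeff]
  apply Finset.sum_congr rfl
  intro j _
  have h : Polynomial.C (y j) * Polynomial.X ^ (m - 1 - (j : ℕ)) * R
      = (Polynomial.C (y j) * R) * Polynomial.X ^ (m - 1 - (j : ℕ)) := by ring
  rw [h, Polynomial.coeff_mul_X_pow']
  split_ifs with h
  · rw [Polynomial.coeff_C_mul]
  · rfl

lemma natDegree_X_mul_revPoly_le (m : ℕ) (hm : 0 < m) (y : Fin m → ℂ) :
    (Polynomial.X * revPoly m y).natDegree ≤ m := by
  calc (Polynomial.X * revPoly m y).natDegree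
      ≤ Polynomial.X.natDegree + (revPoly m y).natDegree := Polynomial.natDegree_mul_le
    _ ≤ 1 + (m - 1) := add_le_add Polynomial.natDegree_X_le (natDegree_revPoly_le _ _)
    _ ≤ m := by omega

lemma sylvester_mulVec (L₁ L₂ : ℕ) (hL₁ : 0 < L₁) (hL₂ : 0 < L₂)
    (y₁ : Fin L₁ → ℂ) (y₂ : Fin L₂ → ℂ)
    (v : Fin (L₁ + L₂) → ℂ) (i : Fin (L₁ + L₂)) :
    (sylvester L₁ L₂ (Polynomial.X * revPoly L₁ y₁) (Polynomial.X * revPoly L₂ y₂)).mulVec v i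
      = (revPoly L₁ (fun j => v (Fin.castAdd L₂ j)) * (Polynomial.X * revPoly L₂ y₂)
          - revPoly L₂ (fun j => v (Fin.natAdd L₁ j)) * (Polynomial.X * revPoly L₁ y₁)).coeff
          (L₁ + L₂ - 1 - (i : ℕ)) := by
  classical
  have hi := i.2
  have hd₂ : ∀ k, L₂ < k → (Polynomial.X * revPoly L₂ y₂).coeff k = 0 := fun k hk =>
    Polynomial.coeff_eq_zero_of_natDegree_lt (lt_of_le_of_lt (natDegree_X_mul_revPoly_le _ hL₂ _) hk)
  have hd₁ : ∀ k, L₁ < k → (Polynomial.X * revPoly L₁ y₁).coeff k = 0 := fun k hk =>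
    Polynomial.coeff_eq_zero_of_natDegree_lt (lt_of_le_of_lt (natDegree_X_mul_revPoly_le _ hL₁ _) hk)
  rw [Matrix.mulVec, dotProduct, Polynomial.coeff_sub, coeff_revPoly_mul, coeff_revPoly_mul,
    Fin.sum_univ_add, sub_eq_add_neg, ← Finset.sum_neg_distrib]
  congr 1
  · apply Finset.sum_congr rfl
    intro j _
    have hj := j.2
    simp only [sylvester, Fin.coe_castAdd]
    rw [if_pos hj]
    by_cases h1 : (j : ℕ) ≤ (i : ℕ) ∧ (i : ℕ) ≤ (j : ℕ) + L₂
    · rw [if_pos h1, if_pos (by omega), mul_comm]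
      have he : (L₁ + L₂ - 1 - (i : ℕ)) - (L₁ - 1 - (j : ℕ)) = L₂ - ((i : ℕ) - (j : ℕ)) := by omega
      rw [he]
    · rw [if_neg h1, zero_mul]
      by_cases h2 : L₁ - 1 - (j : ℕ) ≤ L₁ + L₂ - 1 - (i : ℕ)
      · rw [if_pos h2, hd₂ _ (by omega), mul_zero]
      · rw [if_neg h2]
  · apply Finset.sum_congr rfl
    intro j _
    have hj := j.2
    simp only [sylvester, Fin.coe_natAdd]
    rw [if_neg (by omega)]
    have hsub : L₁ + (j : ℕ) - L₁ = (j : ℕ) := by omega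
    rw [hsub]
    by_cases h1 : (j : ℕ) ≤ (i : ℕ) ∧ (i : ℕ) ≤ (j : ℕ) + L₁
    · rw [if_pos h1, if_pos (by omega)]
      have he : (L₁ + L₂ - 1 - (i : ℕ)) - (L₂ - 1 - (j : ℕ)) = L₁ - ((i : ℕ) - (j : ℕ)) := by omega
      rw [he]; ring
    · rw [if_neg h1, zero_mul]
      by_cases h2 : L₂ - 1 - (j : ℕ) ≤ L₁ + L₂ - 1 - (i : ℕ)
      · rw [if_pos h2, hd₁ _ (by omega), mul_zero, neg_zero]
      · rw [if_neg h2, neg_zero]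

theorem dual_certificate_properties (L₁ L₂ : ℕ) (hL₁ : 0 < L₁) (hL₂ : 0 < L₂)
    (x₁ : Fin L₁ → ℂ) (x₂ : Fin L₂ → ℂ)
    (hx₁ : x₁ ⟨0, hL₁⟩ ≠ 0) (hx₂ : x₂ ⟨0, hL₂⟩ ≠ 0)
    (hcop : IsCoprime
      (∑ n : Fin L₁, Polynomial.C (x₁ n) * Polynomial.X ^ (L₁ - 1 - (n : ℕ)))
      (∑ n : Fin L₂, Polynomial.C (x₂ n) * Polynomial.X ^ (L₂ - 1 - (n : ℕ)))) :
    letI P₁ : Polynomial ℂ := ∑ n : Fin L₁, Polynomial.C (x₁ n) * Polynomial.X ^ (L₁ - (n : ℕ))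
    letI P₂ : Polynomial ℂ := ∑ n : Fin L₂, Polynomial.C (x₂ n) * Polynomial.X ^ (L₂ - (n : ℕ))
    letI S := sylvester L₁ L₂ P₁ P₂
    S.mulVec (Fin.append x₁ x₂) = 0 ∧
    S.rank = L₁ + L₂ - 1 ∧
    (Sᴴ * S).PosSemidef ∧
    (Sᴴ * S).mulVec (Fin.append x₁ x₂) = 0 ∧
    (Sᴴ * S).rank = L₁ + L₂ - 1 := by
  have hcop' : IsCoprime (revPoly L₁ x₁) (revPoly L₂ x₂) := hcop
  set Q₁ : Polynomial ℂ := revPoly L₁ x₁ with hQ₁def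
  set Q₂ : Polynomial ℂ := revPoly L₂ x₂ with hQ₂def
  have hcQ₁ : Q₁.coeff (L₁ - 1) = x₁ ⟨0, hL₁⟩ := by
    have := coeff_revPoly L₁ x₁ ⟨0, hL₁⟩
    simpa using this
  have hcQ₂ : Q₂.coeff (L₂ - 1) = x₂ ⟨0, hL₂⟩ := by
    have := coeff_revPoly L₂ x₂ ⟨0, hL₂⟩
    simpa using this
  have hQ₁ne : Q₁ ≠ 0 := fun h => hx₁ (by rw [← hcQ₁, h, Polynomial.coeff_zero])
  have hdegQ₁ : Q₁.natDegree = L₁ - 1 :=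
    le_antisymm (natDegree_revPoly_le _ _)
      (Polynomial.le_natDegree_of_ne_zero (by rw [hcQ₁]; exact hx₁))
  -- the matrix with polynomials rewritten
  have hSS : sylvester L₁ L₂
        (∑ n : Fin L₁, Polynomial.C (x₁ n) * Polynomial.X ^ (L₁ - (n : ℕ)))
        (∑ n : Fin L₂, Polynomial.C (x₂ n) * Polynomial.X ^ (L₂ - (n : ℕ)))
      = sylvester L₁ L₂ (Polynomial.X * Q₁) (Polynomial.X * Q₂) := by
    rw [X_mul_revPoly, X_mul_revPoly]
  set S' := sylvester L₁ L₂ (Polynomial.X * Q₁) (Polynomial.X * Q₂) with hS'def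
  -- null vector
  have hxapp : S'.mulVec (Fin.append x₁ x₂) = 0 := by
    funext i
    rw [hS'def, sylvester_mulVec L₁ L₂ hL₁ hL₂ x₁ x₂]
    have e1 : (fun j => Fin.append x₁ x₂ (Fin.castAdd L₂ j)) = x₁ :=
      funext fun j => Fin.append_left _ _ _
    have e2 : (fun j => Fin.append x₁ x₂ (Fin.natAdd L₁ j)) = x₂ :=
      funext fun j => Fin.append_right _ _ _
    rw [e1, e2, ← hQ₁def, ← hQ₂def]
    have : Q₁ * (Polynomial.X * Q₂) - Q₂ * (Polynomial.X * Q₁) = 0 := by ring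
    rw [this, Polynomial.coeff_zero]
    rfl
  -- kernel characterization
  have hker : ∀ v : Fin (L₁ + L₂) → ℂ, S'.mulVec v = 0 →
      ∃ c : ℂ, v = c • Fin.append x₁ x₂ := by
    intro v hv
    have hcoeff : ∀ i : Fin (L₁ + L₂),
        (revPoly L₁ (fun j => v (Fin.castAdd L₂ j)) * (Polynomial.X * Q₂)
          - revPoly L₂ (fun j => v (Fin.natAdd L₁ j)) * (Polynomial.X * Q₁)).coeff
          (L₁ + L₂ - 1 - (i : ℕ)) = 0 := by
      intro i
      rw [hQ₁def, hQ₂def, ← sylvester_mulVec L₁ L₂ hL₁ hL₂ x₁ x₂ v i, ← hQ₁def, ← hQ₂def,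
        ← hS'def, hv]
      rfl
    have hzero : revPoly L₁ (fun j => v (Fin.castAdd L₂ j)) * (Polynomial.X * Q₂)
        = revPoly L₂ (fun j => v (Fin.natAdd L₁ j)) * (Polynomial.X * Q₁) := by
      rw [← sub_eq_zero]
      apply Polynomial.ext
      intro k
      rw [Polynomial.coeff_zero]
      by_cases hk : k ≤ L₁ + L₂ - 1
      · have hik : L₁ + L₂ - 1 - (L₁ + L₂ - 1 - k) = k := by omega
        have := hcoeff ⟨L₁ + L₂ - 1 - k, by omega⟩
        rwa [show ((⟨L₁ + L₂ - 1 - k, by omega⟩ : Fin (L₁ + L₂)) : ℕ) = L₁ + L₂ - 1 - k from rfl,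
          hik] at this
      · apply Polynomial.coeff_eq_zero_of_natDegree_lt
        have d1 : (revPoly L₁ (fun j => v (Fin.castAdd L₂ j)) * (Polynomial.X * Q₂)).natDegree
            ≤ (L₁ - 1) + L₂ :=
          Polynomial.natDegree_mul_le.trans
            (add_le_add (natDegree_revPoly_le _ _) (natDegree_X_mul_revPoly_le _ hL₂ _))
        have d2 : (revPoly L₂ (fun j => v (Fin.natAdd L₁ j)) * (Polynomial.X * Q₁)).natDegree
            ≤ (L₂ - 1) + L₁ :=
          Polynomial.natDegree_mul_le.trans
            (add_le_add (natDegree_revPoly_le _ _) (natDegree_X_mul_revPoly_le _ hL₁ _))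
        have := Polynomial.natDegree_sub_le
          (revPoly L₁ (fun j => v (Fin.castAdd L₂ j)) * (Polynomial.X * Q₂))
          (revPoly L₂ (fun j => v (Fin.natAdd L₁ j)) * (Polynomial.X * Q₁))
        omega
    set A := revPoly L₁ (fun j => v (Fin.castAdd L₂ j)) with hAdef
    set B := revPoly L₂ (fun j => v (Fin.natAdd L₁ j)) with hBdef
    have hAB : A * Q₂ = B * Q₁ := by
      apply mul_left_cancel₀ (Polynomial.X_ne_zero (R := ℂ))
      calc Polynomial.X * (A * Q₂) = A * (Polynomial.X * Q₂) := by ring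
        _ = B * (Polynomial.X * Q₁) := hzero
        _ = Polynomial.X * (B * Q₁) := by ring
    have hdvd : Q₁ ∣ A := hcop'.dvd_of_dvd_mul_right ⟨B, by rw [hAB]; ring⟩
    obtain ⟨D, hD⟩ := hdvd
    have hmain : ∃ c : ℂ, A = Q₁ * Polynomial.C c ∧ B = Polynomial.C c * Q₂ := by
      by_cases hD0 : D = 0
      · refine ⟨0, ?_, ?_⟩
        · rw [hD, hD0]; simp
        · have hA0 : A = 0 := by rw [hD, hD0, mul_zero]
          have : B * Q₁ = 0 := by rw [← hAB, hA0, zero_mul]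
          rcases mul_eq_zero.mp this with h | h
          · rw [h]; simp
          · exact absurd h hQ₁ne
      · have hdegA : A.natDegree = Q₁.natDegree + D.natDegree := by
          rw [hD]; exact Polynomial.natDegree_mul hQ₁ne hD0
        have hdegAle : A.natDegree ≤ L₁ - 1 := natDegree_revPoly_le _ _
        have hdegD : D.natDegree = 0 := by omega
        refine ⟨D.coeff 0, ?_, ?_⟩
        · rw [hD, ← Polynomial.eq_C_of_natDegree_eq_zero hdegD]
        · apply mul_right_cancel₀ hQ₁ne
          rw [← hAB, hD, ← Polynomial.eq_C_of_natDegree_eq_zero hdegD]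
          ring
    obtain ⟨c, hA', hB'⟩ := hmain
    refine ⟨c, funext fun k => ?_⟩
    refine Fin.addCases (fun j => ?_) (fun j => ?_) k
    · have h1 : v (Fin.castAdd L₂ j) = A.coeff (L₁ - 1 - (j : ℕ)) :=
        (coeff_revPoly L₁ (fun j => v (Fin.castAdd L₂ j)) j).symm
      rw [h1, hA', Polynomial.coeff_mul_C, hQ₁def, coeff_revPoly]
      rw [Pi.smul_apply, Fin.append_left, smul_eq_mul, mul_comm]
    · have h1 : v (Fin.natAdd L₁ j) = B.coeff (L₂ - 1 - (j : ℕ)) :=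
        (coeff_revPoly L₂ (fun j => v (Fin.natAdd L₁ j)) j).symm
      rw [h1, hB', Polynomial.coeff_C_mul, hQ₂def, coeff_revPoly]
      rw [Pi.smul_apply, Fin.append_right, smul_eq_mul]
  -- rank
  have hxne : Fin.append x₁ x₂ ≠ 0 := by
    intro h
    apply hx₁
    have := congrFun h (Fin.castAdd L₂ ⟨0, hL₁⟩)
    rwa [Fin.append_left] at this
  have hkerEq : LinearMap.ker S'.mulVecLin = Submodule.span ℂ {Fin.append x₁ x₂} := by
    apply le_antisymm
    · intro v hv
      rw [LinearMap.mem_ker, Matrix.mulVecLin_apply] at hv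
      obtain ⟨c, rfl⟩ := hker v hv
      exact Submodule.smul_mem _ _ (Submodule.mem_span_singleton_self _)
    · rw [Submodule.span_le, Set.singleton_subset_iff]
      exact LinearMap.mem_ker.mpr (by rw [Matrix.mulVecLin_apply, hxapp])
  have hrank : S'.rank = L₁ + L₂ - 1 := by
    have h1 := LinearMap.finrank_range_add_finrank_ker S'.mulVecLin
    rw [hkerEq, finrank_span_singleton hxne] at h1
    have h2 : Module.finrank ℂ (Fin (L₁ + L₂) → ℂ) = L₁ + L₂ := by simp
    rw [Matrix.rank]
    omega
  refine ⟨?_, ?_, ?_, ?_, ?_⟩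
  · rw [hSS]; exact hxapp
  · rw [hSS]; exact hrank
  · rw [hSS]; exact Matrix.posSemidef_conjTranspose_mul_self _
  · rw [hSS, ← Matrix.mulVec_mulVec, hxapp, Matrix.mulVec_zero]
  · rw [hSS, Matrix.rank_conjTranspose_mul_self]; exact hrank
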